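/- Let m ≥ 2 be an integer, let a_{j,l} (2 ≤ j ≤ m, 1 ≤ l ≤ j−1) be integers, and fix p with 1 ≤ p ≤ m−1. Suppose there exists q with 1 ≤ q ≤ m−p such that a_{p+r,p} = 0 for 1 ≤ r ≤ q−1, a_{p+q,p} = −1, and a_{p+r,p} = a_{p+r,p+q} for q+1 ≤ r ≤ m−p. Then b_{p,q} = −1 and b_{p,r} = 0 for all r ≠ q with 1 ≤ r ≤ m−p; in particular ∑_{r=1}^{m−p} |b_{p,r}| = 1. -/
import Mathlib


/-- For integers `a j l` (`2 ≤ j ≤ m`, `1 ≤ l ≤ j−1`) and `b p q` defined recursively by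
`b p 1 = a (p+1) p` and `b p q = a (p+q) p + ∑_{r=1}^{q−1} min(0, b p r) · a (p+q) (p+r)`:
if `p` is fixed with `1 ≤ p ≤ m−1` and there is `q` with `1 ≤ q ≤ m−p` such that
`a (p+r) p = 0` for `1 ≤ r ≤ q−1`, `a (p+q) p = −1`, and `a (p+r) p = a (p+r) (p+q)` for
`q+1 ≤ r ≤ m−p`, then `b p q = −1` and `b p r = 0` for all `r ≠ q` with `1 ≤ r ≤ m−p`;
in particular `∑_{r=1}^{m−p} |b p r| = 1`. -/
theorem stmt_9 (m : ℕ) (hm : 2 ≤ m) (a : ℕ → ℕ → ℤ) (b : ℕ → ℕ → ℤ)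
    (hb1 : ∀ p, 1 ≤ p → p ≤ m - 1 → b p 1 = a (p + 1) p)
    (hbq : ∀ p q, 1 ≤ p → 2 ≤ q → p + q ≤ m →
      b p q = a (p + q) p + ∑ r ∈ Finset.Icc 1 (q - 1), min 0 (b p r) * a (p + q) (p + r))
    (p : ℕ) (hp1 : 1 ≤ p) (hp2 : p ≤ m - 1)
    (q : ℕ) (hq1 : 1 ≤ q) (hq2 : q ≤ m - p)
    (ha0 : ∀ r, 1 ≤ r → r ≤ q - 1 → a (p + r) p = 0)
    (haq : a (p + q) p = -1)
    (har : ∀ r, q + 1 ≤ r → r ≤ m - p → a (p + r) p = a (p + r) (p + q)) :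
    b p q = -1 ∧
    (∀ r, 1 ≤ r → r ≤ m - p → r ≠ q → b p r = 0) ∧
    ∑ r ∈ Finset.Icc 1 (m - p), |b p r| = 1 := by
  have key : ∀ r, 1 ≤ r → r ≤ m - p → b p r = if r = q then (-1 : ℤ) else 0 := by
    intro r
    induction r using Nat.strong_induction_on with
    | _ r ih =>
      intro hr1 hr2
      by_cases hr : r = 1
      · subst hr
        rw [hb1 p hp1 hp2]
        by_cases h1q : 1 = q
        · rw [if_pos h1q, h1q]
          exact haq
        · rw [if_neg h1q]
          exact ha0 1 le_rfl (by omega)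
      · have hr2' : 2 ≤ r := by omega
        rw [hbq p r hp1 hr2' (by omega)]
        have hsum : ∀ s ∈ Finset.Icc 1 (r - 1),
            min 0 (b p s) * a (p + r) (p + s)
              = if s = q then -a (p + r) (p + q) else 0 := by
          intro s hs
          simp only [Finset.mem_Icc] at hs
          rw [ih s (by omega) hs.1 (by omega)]
          by_cases hsq : s = q
          · subst hsq; simp
          · simp [hsq]
        rw [Finset.sum_congr rfl hsum, Finset.sum_ite_eq' (Finset.Icc 1 (r - 1)) q
            (fun _ => -a (p + r) (p + q))]
        by_cases hrq : r = q
        · subst hrq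
          rw [if_pos rfl, if_neg (by simp [Finset.mem_Icc]; omega), haq]
          ring
        · rw [if_neg hrq]
          rcases lt_or_gt_of_ne hrq with h | h
          · rw [if_neg (by simp [Finset.mem_Icc]; omega), ha0 r hr1 (by omega)]
            ring
          · rw [if_pos (by simp [Finset.mem_Icc]; omega), har r (by omega) hr2]
            ring
  refine ⟨by rw [key q hq1 hq2, if_pos rfl], fun r h1 h2 hne => by rw [key r h1 h2, if_neg hne],
    ?_⟩
  have : ∀ r ∈ Finset.Icc 1 (m - p), |b p r| = if r = q then (1 : ℤ) else 0 := by
    intro r hr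
    simp only [Finset.mem_Icc] at hr
    rw [key r hr.1 hr.2]
    by_cases hrq : r = q <;> simp [hrq]
  rw [Finset.sum_congr rfl this, Finset.sum_ite_eq' (Finset.Icc 1 (m - p)) q (fun _ => (1 : ℤ)),
    if_pos (by simp [Finset.mem_Icc]; omega)]
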